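/- For every finitely supported probability distribution D on [−1,1] satisfying the 2-sample median constraint, there exists a probability distribution D′ supported on the set {−1, 0, 1} that also satisfies the 2-sample median constraint and has E[D′] ≥ E[D]. -/

import Mathlib

set_option maxHeartbeats 2000000

open MeasureTheory

/-- A probability distribution `μ` on `[-1,1]` satisfies the `k`-sample median constraint if
for `k` i.i.d. samples `Y_1, …, Y_k ~ μ`, `Pr[Y_1 + ⋯ + Y_k ≤ 0] ≥ 1/2`. -/
def MedianConstraint (k : ℕ) (μ : Measure ℝ) : Prop :=
  (1 : ENNReal) / 2 ≤ Measure.pi (fun _ : Fin k => μ) {y | ∑ i, y i ≤ 0}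

namespace Stmt7Aux


lemma key (m z n a b : ℝ) (hm : 0 ≤ m) (hz : 0 ≤ z) (hn : 0 ≤ n)
    (ha0 : 0 ≤ a) (hb0 : 0 ≤ b) (ham : a ≤ m) (hbn : b ≤ n)
    (hsum : m + z + n = 1)
    (hc : m^2 + 2*m*z + 2*(a*n - m*b) ≤ 1/2) :
    a - b ≤ Real.sqrt 2 - 1 := by
  set s := Real.sqrt 2 with hs_def
  have hs : s ^ 2 = 2 := Real.sq_sqrt (by norm_num)
  have hs0 : 0 ≤ s := Real.sqrt_nonneg 2
  have hs1 : (11:ℝ)/8 ≤ s := by nlinarith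
  have hs2 : s ≤ (3:ℝ)/2 := by nlinarith
  have hz' : z = 1 - m - n := by linarith
  have hc' : 1/2 - (1-m)^2 ≤ 2*(m-a)*n + 2*m*b := by
    rw [hz'] at hc; nlinarith [hc]
  have hB : 0 ≤ 2*(m-a)*n + 2*m*b - (1/2-(1-m)^2) := by linarith
  have t0 : (0:ℝ) ≤ (m-a)*(1-m-n) := mul_nonneg (by linarith) (by linarith)
  rcases le_or_gt m (1/2) with h1 | h1
  · nlinarith [t0, mul_nonneg hb0 (by linarith : (0:ℝ) ≤ 1 - 2*m),
      sq_nonneg (1 - m + s - 2)]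
  · have hm0 : (0:ℝ) < m := by linarith
    rcases le_or_gt m (s/2) with h2 | h2
    · have t1 : (0:ℝ) ≤ (m-a)*(m-n) := mul_nonneg (by linarith) (by linarith)
      have t2 : (0:ℝ) ≤ (s/2-m)*(m-s/6) := mul_nonneg (by linarith) (by linarith)
      have e : 2*m*(s-1-a+b) = 2*((m-a)*(m-n))
          + (2*(m-a)*n + 2*m*b - (1/2-(1-m)^2))
          + 3*((s/2-m)*(m-s/6)) + (1/4)*(s^2-2) := by ring
      have h : 0 ≤ 2*m*(s-1-a+b) := by
        rw [e, hs]
        have hA : (0:ℝ) ≤ 2*((m-a)*(m-n)) := by linarith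
        have hC : (0:ℝ) ≤ 3*((s/2-m)*(m-s/6)) := by linarith
        exact add_nonneg (add_nonneg (add_nonneg hA hB) hC) (by norm_num)
      have hx : 0 ≤ s-1-a+b :=
        (mul_nonneg_iff_of_pos_left (by linarith : (0:ℝ) < 2*m)).mp h
      linarith
    · have hu : 0 < 1 - m := by
        by_contra hcon
        push_neg at hcon
        have hm1 : m = 1 := by linarith
        have hn0 : n = 0 := by linarith
        have hb0' : b = 0 := le_antisymm (by linarith [hbn, hn0]) hb0
        rw [hn0, hb0', hm1] at hc'
        norm_num at hc'
      have t2 : (0:ℝ) ≤ (2*m-1)*((1-m)-b) := mul_nonneg (by linarith) (by linarith)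
      have t3 : (0:ℝ) ≤ (3*s-4)*(m-s/2) := mul_nonneg (by linarith) (by linarith)
      have e : 2*(1-m)*(s-1-a+b) = 2*((m-a)*(1-m-n))
          + (2*(m-a)*n + 2*m*b - (1/2-(1-m)^2))
          + 2*((2*m-1)*((1-m)-b)) + ((3*s-4)*(m-s/2))
          + 5*(m-s/2)^2 + (1/4)*(s^2-2) := by ring
      have h : 0 ≤ 2*(1-m)*(s-1-a+b) := by
        rw [e, hs]
        have hA : (0:ℝ) ≤ 2*((m-a)*(1-m-n)) := by linarith
        have hC : (0:ℝ) ≤ 2*((2*m-1)*((1-m)-b)) := by linarith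
        have hE : (0:ℝ) ≤ 5*(m-s/2)^2 := by positivity
        exact add_nonneg (add_nonneg (add_nonneg (add_nonneg (add_nonneg hA hB) hC) t3) hE) (by norm_num)
      have hx : 0 ≤ s-1-a+b :=
        (mul_nonneg_iff_of_pos_left (by linarith : (0:ℝ) < 2*(1-m))).mp h
      linarith

lemma pi2 (κ : Measure ℝ) [IsProbabilityMeasure κ] {S : Set (ℝ × ℝ)} (hS : MeasurableSet S) :
    Measure.pi (fun _ : Fin 2 => κ) {y | (y 0, y 1) ∈ S} = (κ.prod κ) S := by
  have h := (measurePreserving_piFinTwo (fun _ : Fin 2 => κ)).measure_preimage hS.nullMeasurableSet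
  exact h

lemma medtoprod (κ : Measure ℝ) [IsProbabilityMeasure κ] :
    Measure.pi (fun _ : Fin 2 => κ) {y | ∑ i, y i ≤ 0}
      = (κ.prod κ) {q : ℝ × ℝ | q.1 + q.2 ≤ 0} := by
  rw [← pi2 κ (by exact measurableSet_le (by fun_prop) measurable_const)]
  congr 1
  ext y
  simp [Fin.sum_univ_two]

noncomputable def pval : ℝ := Real.sqrt 2 / 2
noncomputable def nuM : Measure ℝ :=
  (ENNReal.ofReal pval) • Measure.dirac (1:ℝ) + (ENNReal.ofReal (1-pval)) • Measure.dirac (-1:ℝ)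

lemma hp0 : 0 ≤ pval := by rw [pval]; positivity
lemma hp1 : pval ≤ 1 := by
  rw [pval]; nlinarith [Real.sq_sqrt (by norm_num : (2:ℝ)≥0), Real.sqrt_nonneg 2]
lemma hpsq : pval^2 = 1/2 := by
  rw [pval]; rw [div_pow, Real.sq_sqrt] <;> norm_num

instance : IsProbabilityMeasure nuM := by
  constructor
  simp only [nuM, Measure.add_apply, Measure.smul_apply, smul_eq_mul, measure_univ, mul_one]
  rw [← ENNReal.ofReal_add hp0 (by linarith [hp1])]
  norm_num

lemma nu_supp : nuM ({-1, 0, 1} : Set ℝ)ᶜ = 0 := by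
  simp only [nuM, Measure.add_apply, Measure.smul_apply, smul_eq_mul]
  rw [Measure.dirac_apply' _ (by measurability), Measure.dirac_apply' _ (by measurability)]
  simp

lemma nu_sing (x : ℝ) : nuM {x} = (ENNReal.ofReal pval) * (if x = 1 then 1 else 0)
    + (ENNReal.ofReal (1-pval)) * (if x = -1 then 1 else 0) := by
  simp only [nuM, Measure.add_apply, Measure.smul_apply, smul_eq_mul]
  rw [Measure.dirac_apply' _ (measurableSet_singleton x),
      Measure.dirac_apply' _ (measurableSet_singleton x)]
  simp [Set.indicator, eq_comm]

lemma integrable_dirac' (f : ℝ → ℝ) (hf : Measurable f) (a : ℝ) :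
    Integrable f (Measure.dirac a) := by
  refine ⟨hf.aestronglyMeasurable, ?_⟩
  rw [hasFiniteIntegral_def, lintegral_dirac]
  exact ENNReal.coe_lt_top

lemma nu_int : ∫ x, x ∂nuM = Real.sqrt 2 - 1 := by
  rw [nuM, integral_add_measure, integral_smul_measure, integral_smul_measure,
      integral_dirac, integral_dirac]
  · rw [ENNReal.toReal_ofReal hp0, ENNReal.toReal_ofReal (by linarith [hp1])]
    simp only [smul_eq_mul]
    rw [pval]; ring
  · exact (integrable_dirac' _ measurable_id _).smul_measure (by simp)
  · exact (integrable_dirac' _ measurable_id _).smul_measure (by simp)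

lemma nu_Iic : nuM (Set.Iic (1:ℝ)) = 1 := by
  simp only [nuM, Measure.add_apply, Measure.smul_apply, smul_eq_mul]
  rw [Measure.dirac_apply' _ measurableSet_Iic, Measure.dirac_apply' _ measurableSet_Iic]
  simp only [Set.indicator, Set.mem_Iic]
  norm_num
  rw [← ENNReal.ofReal_add hp0 (by linarith [hp1])]
  norm_num

lemma nu_m1 : nuM {(-1:ℝ)} = ENNReal.ofReal (1-pval) := by
  rw [nu_sing]; norm_num

lemma nu_1 : nuM {(1:ℝ)} = ENNReal.ofReal pval := by
  rw [nu_sing]; norm_num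

lemma nu_med : (1:ENNReal)/2 ≤ (nuM.prod nuM) {q : ℝ × ℝ | q.1 + q.2 ≤ 0} := by
  have hsub : ({(-1:ℝ)} ×ˢ Set.Iic (1:ℝ)) ∪ ({(1:ℝ)} ×ˢ {(-1:ℝ)})
      ⊆ {q : ℝ × ℝ | q.1 + q.2 ≤ 0} := by
    rintro ⟨x, y⟩ (⟨hx, hy⟩ | ⟨hx, hy⟩) <;>
      simp_all [Set.mem_singleton_iff, Set.mem_Iic] <;> linarith
  refine le_trans ?_ (measure_mono hsub)
  rw [measure_union ?hd (((measurableSet_singleton _).prod (measurableSet_singleton _)))]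
  case hd =>
    rw [Set.disjoint_left]
    rintro ⟨x, y⟩ ⟨hx, _⟩ ⟨hx', _⟩
    simp only [Set.mem_singleton_iff] at hx hx'
    norm_num [hx] at hx'
  rw [Measure.prod_prod, Measure.prod_prod, nu_m1, nu_1, nu_Iic, mul_one,
      ← ENNReal.ofReal_mul hp0, ← ENNReal.ofReal_add (by linarith [hp1]) (by nlinarith [hp0, hp1])]
  have : 1 - pval + pval * (1 - pval) = 1/2 := by nlinarith [hpsq]
  rw [this]
  rw [ENNReal.ofReal_div_of_pos (by norm_num), ENNReal.ofReal_one]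
  norm_num

section musection
variable (μ : Measure ℝ) [IsProbabilityMeasure μ]

-- the section decomposition of T4
lemma T4_repr :
    (μ.prod μ) {q : ℝ × ℝ | q.1 < 0 ∧ 0 < q.2 ∧ 0 < q.1 + q.2}
      = ∫⁻ x in Set.Iio 0, μ (Set.Ioi (-x)) ∂μ := by
  have hT4 : MeasurableSet {q : ℝ × ℝ | q.1 < 0 ∧ 0 < q.2 ∧ 0 < q.1 + q.2} := by
    refine MeasurableSet.inter ?_ (MeasurableSet.inter ?_ ?_)
    · exact measurableSet_lt measurable_fst measurable_const
    · exact measurableSet_lt measurable_const measurable_snd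
    · exact measurableSet_lt measurable_const (measurable_fst.add measurable_snd)
  rw [Measure.prod_apply hT4, ← lintegral_indicator measurableSet_Iio]
  refine lintegral_congr fun x => ?_
  by_cases hx : x < 0
  · rw [Set.indicator_of_mem (Set.mem_Iio.mpr hx)]
    congr 1
    ext y
    simp only [Set.mem_preimage, Set.mem_setOf_eq, Set.mem_Ioi]
    constructor
    · rintro ⟨_, _, h3⟩; linarith
    · intro h; exact ⟨hx, by linarith, by linarith⟩
  · rw [Set.indicator_of_notMem (fun h => hx (Set.mem_Iio.mp h))]
    have he : Prod.mk x ⁻¹' {q : ℝ × ℝ | q.1 < 0 ∧ 0 < q.2 ∧ 0 < q.1 + q.2} = (∅ : Set ℝ) := by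
      ext y
      simp only [Set.mem_preimage, Set.mem_setOf_eq, Set.mem_empty_iff_false, iff_false]
      rintro ⟨h1, _, _⟩; exact hx h1
    rw [he, measure_empty]

lemma T3_eq_T4 :
    (μ.prod μ) {q : ℝ × ℝ | q.2 < 0 ∧ 0 < q.1 ∧ 0 < q.1 + q.2}
      = (μ.prod μ) {q : ℝ × ℝ | q.1 < 0 ∧ 0 < q.2 ∧ 0 < q.1 + q.2} := by
  have hT3 : MeasurableSet {q : ℝ × ℝ | q.2 < 0 ∧ 0 < q.1 ∧ 0 < q.1 + q.2} := by
    refine MeasurableSet.inter ?_ (MeasurableSet.inter ?_ ?_)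
    · exact measurableSet_lt measurable_snd measurable_const
    · exact measurableSet_lt measurable_const measurable_fst
    · exact measurableSet_lt measurable_const (measurable_fst.add measurable_snd)
  conv_lhs => rw [← Measure.prod_swap]
  rw [Measure.map_apply measurable_swap hT3]
  congr 1
  ext q
  simp only [Set.mem_preimage, Prod.swap, Set.mem_setOf_eq]
  constructor
  · rintro ⟨h1, h2, h3⟩; exact ⟨h1, h2, by linarith⟩
  · rintro ⟨h1, h2, h3⟩; exact ⟨h1, h2, by linarith⟩

end musection


lemma mu_exp_le (μ : Measure ℝ) [IsProbabilityMeasure μ]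
    (hsupp : μ (Set.Icc (-1 : ℝ) 1)ᶜ = 0)
    (hA : (μ.prod μ) {q : ℝ × ℝ | 0 < q.1 + q.2} ≤ 1/2) :
    ∫ x, x ∂μ ≤ Real.sqrt 2 - 1 := by
  have hae : ∀ᵐ x ∂μ, x ∈ Set.Icc (-1:ℝ) 1 := by
    rw [ae_iff]
    convert hsupp using 2
    rfl
  have hint : Integrable (fun x => x) μ :=
    ⟨measurable_id.aestronglyMeasurable, HasFiniteIntegral.of_bounded (C := 1)
      (hae.mono fun x hx => by rw [Real.norm_eq_abs]; exact abs_le.mpr ⟨hx.1, hx.2⟩)⟩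
  set m := (μ (Set.Ioi (0:ℝ))).toReal with hm_def
  set z := (μ ({0}:Set ℝ)).toReal with hz_def
  set n := (μ (Set.Iio (0:ℝ))).toReal with hn_def
  set aR := ∫ x in Set.Ioi (0:ℝ), x ∂μ with haR_def
  set bR := ∫ x in Set.Iio (0:ℝ), (-x) ∂μ with hbR_def
  -- basic decompositions
  have hIci_set : Set.Ici (0:ℝ) = {0} ∪ Set.Ioi 0 := by
    ext x; simp [le_iff_lt_or_eq, eq_comm, or_comm]
  have hdisj0 : Disjoint ({0}:Set ℝ) (Set.Ioi 0) := by
    rw [Set.disjoint_left]; rintro x hx hx'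
    simp only [Set.mem_singleton_iff] at hx
    simp [hx] at hx'
  have hIci : μ (Set.Ici (0:ℝ)) = μ {0} + μ (Set.Ioi 0) := by
    rw [hIci_set, measure_union hdisj0 measurableSet_Ioi]
  have huniv : μ (Set.Iio (0:ℝ)) + μ (Set.Ici 0) = 1 := by
    rw [← measure_union (Set.Iio_disjoint_Ici le_rfl) measurableSet_Ici,
      Set.Iio_union_Ici, measure_univ]
  have hsum1 : m + z + n = 1 := by
    rw [hm_def, hz_def, hn_def]
    have := huniv
    rw [hIci] at this
    have h2 := ENNReal.toReal_eq_one_iff (μ (Set.Iio (0:ℝ)) + (μ {0} + μ (Set.Ioi 0)))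
    rw [ENNReal.toReal_add (measure_ne_top _ _) (ENNReal.add_ne_top.mpr ⟨measure_ne_top _ _, measure_ne_top _ _⟩),
      ENNReal.toReal_add (measure_ne_top _ _) (measure_ne_top _ _)] at h2
    have h3 := h2.mpr this
    linarith
  have hm0 : 0 ≤ m := ENNReal.toReal_nonneg
  have hz0 : 0 ≤ z := ENNReal.toReal_nonneg
  have hn0 : 0 ≤ n := ENNReal.toReal_nonneg
  -- bounds on aR, bR
  have ham : aR ≤ m := by
    have h1 : aR ≤ ∫ _x in Set.Ioi (0:ℝ), (1:ℝ) ∂μ := by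
      refine setIntegral_mono_ae_restrict hint.integrableOn
        ((integrableOn_const_iff).mpr (Or.inr (measure_lt_top _ _))) ?_
      exact ae_restrict_of_ae (hae.mono fun x hx => hx.2)
    rwa [setIntegral_const, smul_eq_mul, mul_one] at h1
  have ha0 : 0 ≤ aR := setIntegral_nonneg measurableSet_Ioi fun x hx => le_of_lt hx
  have hbn : bR ≤ n := by
    have h1 : bR ≤ ∫ _x in Set.Iio (0:ℝ), (1:ℝ) ∂μ := by
      refine setIntegral_mono_ae_restrict (hint.neg.integrableOn)
        ((integrableOn_const_iff).mpr (Or.inr (measure_lt_top _ _))) ?_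
      exact ae_restrict_of_ae (hae.mono fun x hx => by simp; linarith [hx.1])
    rwa [setIntegral_const, smul_eq_mul, mul_one] at h1
  have hb0 : 0 ≤ bR := setIntegral_nonneg measurableSet_Iio fun x hx => by
    simp only [Set.mem_Iio] at hx; linarith
  -- expectation splits
  have h0int : ∫ x in ({0}:Set ℝ), x ∂μ = 0 := by
    rw [setIntegral_congr_fun (measurableSet_singleton 0) (fun x hx => by simpa using hx)]
    simp
  have hIciInt : ∫ x in Set.Ici (0:ℝ), x ∂μ = aR := by
    rw [hIci_set, setIntegral_union hdisj0 measurableSet_Ioi hint.integrableOn hint.integrableOn,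
      h0int, zero_add]
  have hIioInt : ∫ x in Set.Iio (0:ℝ), x ∂μ = -bR := by
    rw [hbR_def, integral_neg]; ring
  have hsplit : ∫ x, x ∂μ = aR - bR := by
    have h1 := integral_add_compl (s := Set.Iio (0:ℝ)) measurableSet_Iio hint
    rw [Set.compl_Iio, hIciInt, hIioInt] at h1
    linarith
  -- the four subsets of the positive-sum event
  set T1 : Set (ℝ × ℝ) := Set.Ioi (0:ℝ) ×ˢ Set.Ici (0:ℝ) with hT1_def
  set T2 : Set (ℝ × ℝ) := ({0}:Set ℝ) ×ˢ Set.Ioi (0:ℝ) with hT2_def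
  set T3 : Set (ℝ × ℝ) := {q : ℝ × ℝ | q.2 < 0 ∧ 0 < q.1 ∧ 0 < q.1 + q.2} with hT3_def
  set T4 : Set (ℝ × ℝ) := {q : ℝ × ℝ | q.1 < 0 ∧ 0 < q.2 ∧ 0 < q.1 + q.2} with hT4_def
  have hT1 : MeasurableSet T1 := measurableSet_Ioi.prod measurableSet_Ici
  have hT2 : MeasurableSet T2 := (measurableSet_singleton 0).prod measurableSet_Ioi
  have hT3 : MeasurableSet T3 := by
    refine MeasurableSet.inter ?_ (MeasurableSet.inter ?_ ?_)
    · exact measurableSet_lt measurable_snd measurable_const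
    · exact measurableSet_lt measurable_const measurable_fst
    · exact measurableSet_lt measurable_const (measurable_fst.add measurable_snd)
  have hT4 : MeasurableSet T4 := by
    refine MeasurableSet.inter ?_ (MeasurableSet.inter ?_ ?_)
    · exact measurableSet_lt measurable_fst measurable_const
    · exact measurableSet_lt measurable_const measurable_snd
    · exact measurableSet_lt measurable_const (measurable_fst.add measurable_snd)
  have hsub : T1 ∪ T2 ∪ T3 ∪ T4 ⊆ {q : ℝ × ℝ | 0 < q.1 + q.2} := by
    rintro ⟨x, y⟩ (((⟨hx, hy⟩ | ⟨hx, hy⟩) | ⟨h1, h2, h3⟩) | ⟨h1, h2, h3⟩)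
    · simp only [Set.mem_Ioi] at hx
      simp only [Set.mem_Ici] at hy
      simp only [Set.mem_setOf_eq]; linarith
    · simp only [Set.mem_singleton_iff] at hx
      simp only [Set.mem_Ioi] at hy
      simp only [Set.mem_setOf_eq]; rw [hx]; linarith
    · exact h3
    · exact h3
  have hd12 : Disjoint T1 T2 := by
    rw [Set.disjoint_left]
    rintro ⟨x, y⟩ ⟨hx, _⟩ ⟨hx', _⟩
    simp only [Set.mem_Ioi] at hx
    simp only [Set.mem_singleton_iff] at hx'
    rw [hx'] at hx; exact lt_irrefl 0 hx
  have hd13 : Disjoint (T1 ∪ T2) T3 := by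
    rw [Set.disjoint_left]
    rintro ⟨x, y⟩ (⟨_, hy⟩ | ⟨_, hy⟩) ⟨hy', _⟩ <;>
      simp only [Set.mem_Ici, Set.mem_Ioi] at hy <;> linarith
  have hd14 : Disjoint (T1 ∪ T2 ∪ T3) T4 := by
    rw [Set.disjoint_left]
    rintro ⟨x, y⟩ ((⟨hx, _⟩ | ⟨hx, _⟩) | ⟨_, hx, _⟩) ⟨hx', _⟩
    · simp only [Set.mem_Ioi] at hx; linarith
    · simp only [Set.mem_singleton_iff] at hx; simp only at hx'; linarith [hx ▸ hx']
    · simp only at hx'; linarith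
  have hmeasun : (μ.prod μ) (T1 ∪ T2 ∪ T3 ∪ T4)
      = (μ.prod μ) T1 + (μ.prod μ) T2 + (μ.prod μ) T3 + (μ.prod μ) T4 := by
    rw [measure_union hd14 hT4, measure_union hd13 hT3, measure_union hd12 hT2]
  have hsum4 : (μ.prod μ) T1 + (μ.prod μ) T2 + (μ.prod μ) T3 + (μ.prod μ) T4 ≤ 1/2 := by
    rw [← hmeasun]
    exact le_trans (measure_mono hsub) hA
  -- pointwise lower bound for the section measure
  have haux : ∀ x : ℝ, -1 ≤ x → x < 0 → aR + x*m ≤ (μ (Set.Ioi (-x))).toReal := by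
    intro x hx1 hx2
    have ht0 : (0:ℝ) < -x := by linarith
    have hsp : Set.Ioc (0:ℝ) (-x) ∪ Set.Ioi (-x) = Set.Ioi 0 := Set.Ioc_union_Ioi_eq_Ioi ht0.le
    have e1 : aR = (∫ y in Set.Ioc (0:ℝ) (-x), y ∂μ) + ∫ y in Set.Ioi (-x), y ∂μ := by
      rw [haR_def, ← hsp, setIntegral_union (Set.Ioc_disjoint_Ioi le_rfl) measurableSet_Ioi
        hint.integrableOn hint.integrableOn]
    have e2 : (∫ y in Set.Ioc (0:ℝ) (-x), y ∂μ) ≤ (-x) * m := by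
      have h1 : (∫ y in Set.Ioc (0:ℝ) (-x), y ∂μ) ≤ ∫ _y in Set.Ioc (0:ℝ) (-x), (-x) ∂μ :=
        setIntegral_mono_on hint.integrableOn
          ((integrableOn_const_iff).mpr (Or.inr (measure_lt_top _ _))) measurableSet_Ioc
          (fun y hy => hy.2)
      rw [setIntegral_const, smul_eq_mul] at h1
      have h2 : (μ (Set.Ioc (0:ℝ) (-x))).toReal ≤ m :=
        ENNReal.toReal_mono (measure_ne_top _ _) (measure_mono Set.Ioc_subset_Ioi_self)
      calc (∫ y in Set.Ioc (0:ℝ) (-x), y ∂μ) ≤ (μ (Set.Ioc (0:ℝ) (-x))).toReal * (-x) := h1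
        _ ≤ m * (-x) := mul_le_mul_of_nonneg_right h2 ht0.le
        _ = (-x) * m := by ring
    have e3 : (∫ y in Set.Ioi (-x), y ∂μ) ≤ (μ (Set.Ioi (-x))).toReal := by
      have h1 : (∫ y in Set.Ioi (-x), y ∂μ) ≤ ∫ _y in Set.Ioi (-x), (1:ℝ) ∂μ := by
        refine setIntegral_mono_ae_restrict hint.integrableOn
          ((integrableOn_const_iff).mpr (Or.inr (measure_lt_top _ _))) ?_
        exact ae_restrict_of_ae (hae.mono fun y hy => hy.2)
      rwa [setIntegral_const, smul_eq_mul, mul_one] at h1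
    linarith
  have hgmono : Monotone (fun x : ℝ => μ (Set.Ioi (-x))) := by
    intro x y hxy
    exact measure_mono (fun t ht => by simp only [Set.mem_Ioi] at *; linarith)
  have hgmeas : Measurable (fun x : ℝ => μ (Set.Ioi (-x))) := hgmono.measurable
  -- null sets from support
  have hIio1 : μ (Set.Iio (-1:ℝ)) = 0 := by
    refine measure_mono_null (fun t ht => ?_) hsupp
    simp only [Set.mem_Iio] at ht
    simp only [Set.mem_compl_iff, Set.mem_Icc, not_and_or, not_le]
    left; linarith
  have hset_ae : Set.Ico (-1:ℝ) 0 =ᵐ[μ] Set.Iio 0 := by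
    rw [MeasureTheory.ae_eq_set]
    constructor
    · have he : Set.Ico (-1:ℝ) 0 \ Set.Iio 0 = ∅ := by
        ext t
        simp only [Set.mem_diff, Set.mem_Ico, Set.mem_Iio, Set.mem_empty_iff_false, iff_false]
        rintro ⟨⟨_, h2⟩, h3⟩; exact h3 h2
      rw [he, measure_empty]
    · refine measure_mono_null (fun t ht => ?_) hIio1
      simp only [Set.mem_diff, Set.mem_Iio, Set.mem_Ico, not_and_or, not_le, not_lt] at ht
      rcases ht.2 with h | h
      · simpa using h
      · linarith [ht.1]
  -- lower bound the T4 mass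
  have hI4le : (∫⁻ x in Set.Ico (-1:ℝ) 0, μ (Set.Ioi (-x)) ∂μ) ≤ (μ.prod μ) T4 := by
    rw [hT4_def, T4_repr]
    exact lintegral_mono_set Set.Ico_subset_Iio_self
  have hI4real : (∫⁻ x in Set.Ico (-1:ℝ) 0, μ (Set.Ioi (-x)) ∂μ).toReal
      = ∫ x in Set.Ico (-1:ℝ) 0, (μ (Set.Ioi (-x))).toReal ∂μ := by
    refine (integral_toReal hgmeas.aemeasurable ?_).symm
    exact Filter.Eventually.of_forall (fun x => measure_lt_top _ _)
  have hgint : Integrable (fun x : ℝ => (μ (Set.Ioi (-x))).toReal) (μ.restrict (Set.Ico (-1:ℝ) 0)) := by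
    refine ⟨(ENNReal.measurable_toReal.comp hgmeas).aestronglyMeasurable, ?_⟩
    refine HasFiniteIntegral.of_bounded (C := 1) (Filter.Eventually.of_forall (fun x => ?_))
    rw [Real.norm_eq_abs, abs_of_nonneg ENNReal.toReal_nonneg]
    exact ENNReal.toReal_le_of_le_ofReal zero_le_one (by simpa using prob_le_one)
  have hlinint : Integrable (fun x : ℝ => aR + x*m) (μ.restrict (Set.Ico (-1:ℝ) 0)) :=
    (integrable_const aR).add ((hint.restrict).mul_const m)
  have hlow : aR * n - m * bR ≤ (∫⁻ x in Set.Ico (-1:ℝ) 0, μ (Set.Ioi (-x)) ∂μ).toReal := by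
    rw [hI4real]
    have h1 : ∫ x in Set.Ico (-1:ℝ) 0, (aR + x*m) ∂μ
        ≤ ∫ x in Set.Ico (-1:ℝ) 0, (μ (Set.Ioi (-x))).toReal ∂μ := by
      refine setIntegral_mono_on hlinint hgint measurableSet_Ico (fun x hx => ?_)
      exact haux x hx.1 hx.2
    have h2 : ∫ x in Set.Ico (-1:ℝ) 0, (aR + x*m) ∂μ = aR * n - m * bR := by
      rw [setIntegral_congr_set hset_ae,
        integral_add (integrable_const aR) (hint.restrict.mul_const m),
        integral_mul_const, setIntegral_const, smul_eq_mul, hIioInt, measureReal_def, ← hn_def]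
      ring
    linarith
  have hT4low : aR * n - m * bR ≤ ((μ.prod μ) T4).toReal :=
    le_trans hlow (ENNReal.toReal_mono (measure_ne_top _ _) hI4le)
  -- values of T1, T2, T3
  have hval1 : ((μ.prod μ) T1).toReal = m * (z + m) := by
    rw [hT1_def, Measure.prod_prod, ENNReal.toReal_mul, hIci,
      ENNReal.toReal_add (measure_ne_top _ _) (measure_ne_top _ _)]
  have hval2 : ((μ.prod μ) T2).toReal = z * m := by
    rw [hT2_def, Measure.prod_prod, ENNReal.toReal_mul]
  have hval34 : (μ.prod μ) T3 = (μ.prod μ) T4 := by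
    rw [hT3_def, hT4_def]; exact T3_eq_T4 μ
  -- assemble the real inequality
  have htot : m * (z + m) + z * m + 2 * ((μ.prod μ) T4).toReal ≤ 1/2 := by
    have h1 := ENNReal.toReal_mono (by norm_num : ((1:ENNReal)/2) ≠ ⊤) hsum4
    rw [ENNReal.toReal_add (by finiteness) (measure_ne_top _ _),
      ENNReal.toReal_add (by finiteness) (measure_ne_top _ _),
      ENNReal.toReal_add (measure_ne_top _ _) (measure_ne_top _ _), hval1, hval2, hval34] at h1
    have h2 : ((1:ENNReal)/2).toReal = 1/2 := by
      rw [ENNReal.toReal_div]; norm_num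
    rw [h2] at h1
    linarith
  have hcon : m^2 + 2*m*z + 2*(aR*n - m*bR) ≤ 1/2 := by nlinarith [hT4low, htot]
  rw [hsplit]
  exact Stmt7Aux.key m z n aR bR hm0 hz0 hn0 ha0 hb0 ham hbn hsum1 hcon


end Stmt7Aux

/-- For every finitely supported probability distribution `μ` on `[-1,1]`
satisfying the 2-sample median constraint, there is a probability distribution `ν`
supported on `{-1, 0, 1}` that also satisfies the 2-sample median constraint and has
expectation at least that of `μ`. -/
theorem stmt7 (μ : Measure ℝ) [IsProbabilityMeasure μ]
    (hsupp : μ (Set.Icc (-1 : ℝ) 1)ᶜ = 0)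
    (hfin : ∃ s : Finset ℝ, μ ((s : Set ℝ))ᶜ = 0)
    (hmed : MedianConstraint 2 μ) :
    ∃ ν : Measure ℝ, IsProbabilityMeasure ν ∧ ν ({-1, 0, 1} : Set ℝ)ᶜ = 0 ∧
      MedianConstraint 2 ν ∧ ∫ x, x ∂μ ≤ ∫ x, x ∂ν := by
  have hmed' : (1:ENNReal)/2 ≤ (μ.prod μ) {q : ℝ × ℝ | q.1 + q.2 ≤ 0} := by
    rw [← Stmt7Aux.medtoprod μ]; exact hmed
  have hC : MeasurableSet {q : ℝ × ℝ | q.1 + q.2 ≤ 0} :=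
    measurableSet_le (by fun_prop) measurable_const
  have hA : (μ.prod μ) {q : ℝ × ℝ | 0 < q.1 + q.2} ≤ 1/2 := by
    have hcompl : {q : ℝ × ℝ | 0 < q.1 + q.2} = {q : ℝ × ℝ | q.1 + q.2 ≤ 0}ᶜ := by
      ext q; simp [not_le]
    rw [hcompl, measure_compl hC (measure_ne_top _ _), measure_univ]
    refine tsub_le_iff_right.mpr ?_
    calc (1:ENNReal) = 1/2 + 1/2 := by
          rw [ENNReal.div_add_div_same, one_add_one_eq_two]
          exact (ENNReal.div_self (two_ne_zero) (ENNReal.ofNat_ne_top)).symm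
      _ ≤ 1/2 + (μ.prod μ) {q : ℝ × ℝ | q.1 + q.2 ≤ 0} := add_le_add_right hmed' _
  refine ⟨Stmt7Aux.nuM, inferInstance, Stmt7Aux.nu_supp, ?_, ?_⟩
  · rw [MedianConstraint, Stmt7Aux.medtoprod Stmt7Aux.nuM]
    exact Stmt7Aux.nu_med
  · rw [Stmt7Aux.nu_int]
    exact Stmt7Aux.mu_exp_le μ hsupp hA
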